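/- Let d ≥ 2 be a real number, let S ⊆ V be a set of vertices, each of degree in [d, 2d), with |S| ≥ 6·d^{0.6}, and let k be an even integer with 4 ≤ k ≤ d^{0.1}. Then the probability that fewer than d^{0.1} vertices of S are sampled, i.e., Pr[|S ∩ V_samp| < d^{0.1}], is at most 8·(2k/d^{0.1})^{k/2}. -/

import Mathlib

open MeasureTheory ProbabilityTheory

set_option maxHeartbeats 2000000

open Finset

section AUX

lemma aux_integrable_of_bdd {Ω : Type*} [MeasurableSpace Ω] (P : Measure Ω)
    [IsProbabilityMeasure P] {f : Ω → ℝ} (hf : Measurable f) (C : ℝ)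
    (hC : ∀ ω, |f ω| ≤ C) : Integrable f P :=
  (integrable_const C).mono' hf.aestronglyMeasurable
    (Filter.Eventually.of_forall (by simpa [Real.norm_eq_abs] using hC))

lemma aux_integral_indep_prod {Ω ι : Type*} [MeasurableSpace Ω] {P : Measure Ω}
    [IsProbabilityMeasure P] [Fintype ι] (f : ι → Ω → ℝ)
    (hindep : iIndepFun f P)
    (hmeas : ∀ i, Measurable (f i)) (hbdd : ∀ i ω, |f i ω| ≤ 1) :
    ∫ ω, ∏ i, f i ω ∂P = ∏ i, ∫ ω, f i ω ∂P := by
  classical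
  have key : ∀ s : Finset ι, ∫ ω, ∏ i ∈ s, f i ω ∂P = ∏ i ∈ s, ∫ ω, f i ω ∂P := by
    intro s
    induction s using Finset.induction_on with
    | empty => simp
    | @insert a s ha ih =>
      have hmprod : Measurable (fun ω => ∏ i ∈ s, f i ω) :=
        Finset.measurable_prod s (fun i _ => hmeas i)
      have hbprod : ∀ ω, |∏ i ∈ s, f i ω| ≤ 1 := by
        intro ω
        rw [Finset.abs_prod]
        exact Finset.prod_le_one (fun i _ => abs_nonneg _) (fun i _ => hbdd i ω)
      have hint : Integrable (fun ω => ∏ i ∈ s, f i ω) P :=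
        aux_integrable_of_bdd P hmprod 1 hbprod
      have hinta : Integrable (f a) P := aux_integrable_of_bdd P (hmeas a) 1 (hbdd a)
      have hind : IndepFun (∏ j ∈ s, f j) (f a) P :=
        hindep.indepFun_finset_prod_of_notMem hmeas ha
      have hmul := hind.integral_mul_eq_mul_integral ?_ hinta.aestronglyMeasurable
      · have hrw : ∫ ω, ∏ i ∈ insert a s, f i ω ∂P = ∫ ω, f a ω * ∏ i ∈ s, f i ω ∂P := by
          apply integral_congr_ae; filter_upwards with ω; rw [Finset.prod_insert ha]
        rw [hrw, Finset.prod_insert ha, ← ih]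
        have h1 : (fun ω => f a ω * ∏ i ∈ s, f i ω) = (∏ j ∈ s, f j) * (f a) := by
          funext ω
          simp [Finset.prod_apply, mul_comm]
        calc ∫ ω, f a ω * ∏ i ∈ s, f i ω ∂P = ∫ ω, ((∏ j ∈ s, f j) * f a) ω ∂P := by rw [h1]
          _ = (∫ ω, (∏ j ∈ s, f j) ω ∂P) * ∫ ω, f a ω ∂P := hmul
          _ = (∫ ω, f a ω ∂P) * ∫ ω, ∏ i ∈ s, f i ω ∂P := by
              rw [mul_comm]; congr 1; apply integral_congr_ae; filter_upwards with ω
              simp [Finset.prod_apply]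
      · have : (∏ j ∈ s, f j) = fun ω => ∏ i ∈ s, f i ω := by
          funext ω; simp [Finset.prod_apply]
        rw [this]; exact hint.aestronglyMeasurable
  exact key Finset.univ

lemma aux_factorial_ratio {m : ℕ} : ∀ {M : ℕ}, m ≤ M →
    Nat.factorial M ≤ Nat.factorial m * M ^ (M - m) := by
  intro M hmM
  induction M, hmM using Nat.le_induction with
  | base => simp
  | succ M hmM ih =>
    have h1 : M + 1 - m = (M - m) + 1 := by omega
    calc (M+1).factorial = (M+1) * M.factorial := rfl
      _ ≤ (M+1) * (m.factorial * M ^ (M-m)) := Nat.mul_le_mul_left _ ih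
      _ ≤ (M+1) * (m.factorial * (M+1) ^ (M-m)) :=
          Nat.mul_le_mul_left _ (Nat.mul_le_mul_left _ (Nat.pow_le_pow_left (by omega) _))
      _ = m.factorial * (M+1) ^ (M - m + 1) := by ring
      _ = m.factorial * (M+1) ^ (M+1-m) := by rw [h1]

lemma aux_succ_pow (M : ℕ) : ((M : ℝ) + 1) ^ M ≤ 3 * (M : ℝ) ^ M := by
  rcases Nat.eq_zero_or_pos M with h | h
  · subst h; norm_num
  · have hM : (0 : ℝ) < M := by exact_mod_cast h
    have h1 : ((M : ℝ) + 1) = (M : ℝ) * (1 + 1 / M) := by field_simp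
    have h2 : (1 + 1 / (M:ℝ)) ^ M ≤ 3 := by
      have h3 : (1 + 1/(M:ℝ)) ≤ Real.exp (1 / M) := by
        have := Real.add_one_le_exp (1 / (M:ℝ)); linarith
      have h4 : (1 + 1/(M:ℝ)) ^ M ≤ Real.exp (1/M) ^ M :=
        pow_le_pow_left₀ (by positivity) h3 M
      have h5 : Real.exp (1/(M:ℝ)) ^ M = Real.exp ((M : ℝ) * (1/M)) := by
        rw [Real.exp_nat_mul]
      have h6 : (M : ℝ) * (1 / M) = 1 := by field_simp
      have h7 : Real.exp 1 ≤ 3 := by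
        have := Real.exp_one_lt_d9; linarith
      calc (1 + 1/(M:ℝ)) ^ M ≤ Real.exp (1/M) ^ M := h4
        _ = Real.exp 1 := by rw [h5, h6]
        _ ≤ 3 := h7
    calc ((M:ℝ)+1)^M = (M:ℝ)^M * (1+1/M)^M := by rw [h1, mul_pow]
      _ ≤ (M:ℝ)^M * 3 := by
          exact mul_le_mul_of_nonneg_left h2 (by positivity)
      _ = 3 * (M:ℝ)^M := by ring

lemma aux_pow_self_le (M : ℕ) : (M : ℝ) ^ M ≤ 3 ^ M * (M.factorial : ℝ) := by
  induction M with
  | zero => norm_num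
  | succ M ih =>
    have h1 : ((M:ℝ)+1) ^ (M+1) = ((M:ℝ)+1) * ((M:ℝ)+1)^M := by ring
    calc ((M+1 : ℕ) : ℝ) ^ (M+1) = ((M:ℝ)+1) * ((M:ℝ)+1)^M := by push_cast; ring
      _ ≤ ((M:ℝ)+1) * (3 * (M:ℝ)^M) :=
          mul_le_mul_of_nonneg_left (aux_succ_pow M) (by positivity)
      _ ≤ ((M:ℝ)+1) * (3 * (3^M * M.factorial)) := by
          have := mul_le_mul_of_nonneg_left ih (by positivity : (0:ℝ) ≤ 3)
          exact mul_le_mul_of_nonneg_left this (by positivity)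
      _ = 3 ^ (M+1) * (((M:ℝ)+1) * M.factorial) := by ring
      _ = 3 ^ (M+1) * ((M+1).factorial : ℝ) := by
          rw [Nat.factorial_succ]; push_cast; ring

lemma aux_esymm_le {V : Type*} [DecidableEq V] (p : V → ℝ) (hp : ∀ w, 0 ≤ p w)
    (S : Finset V) : ∀ m : ℕ,
    (Nat.factorial m : ℝ) * ∑ T ∈ S.powersetCard m, ∏ v ∈ T, p v ≤ (∑ v ∈ S, p v) ^ m := by
  intro m
  have hE : ∀ n : ℕ, 0 ≤ ∑ T ∈ S.powersetCard n, ∏ v ∈ T, p v := fun n =>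
    Finset.sum_nonneg fun T _ => Finset.prod_nonneg fun v _ => hp v
  have hmu : 0 ≤ ∑ v ∈ S, p v := Finset.sum_nonneg fun v _ => hp v
  induction m with
  | zero => simp
  | succ m ih =>
    have key : ((m : ℝ) + 1) * ∑ T ∈ S.powersetCard (m+1), ∏ v ∈ T, p v
        ≤ (∑ v ∈ S, p v) * ∑ T ∈ S.powersetCard m, ∏ v ∈ T, p v := by
      have step1 : ((m : ℝ) + 1) * ∑ T ∈ S.powersetCard (m+1), ∏ v ∈ T, p v
          = ∑ T ∈ S.powersetCard (m+1), ∑ w ∈ T, p w * ∏ v ∈ T.erase w, p v := by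
        rw [Finset.mul_sum]
        apply Finset.sum_congr rfl
        intro T hT
        rw [Finset.mem_powersetCard] at hT
        have : ∀ w ∈ T, p w * ∏ v ∈ T.erase w, p v = ∏ v ∈ T, p v := fun w hw =>
          Finset.mul_prod_erase T p hw
        rw [Finset.sum_congr rfl this, Finset.sum_const, hT.2]
        push_cast
        ring
      have step2 : ∑ T ∈ S.powersetCard (m+1), ∑ w ∈ T, p w * ∏ v ∈ T.erase w, p v
          = ∑ w ∈ S, ∑ T' ∈ (S.erase w).powersetCard m, p w * ∏ v ∈ T', p v := by
        rw [Finset.sum_sigma', Finset.sum_sigma']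
        apply Finset.sum_nbij' (fun x => ⟨x.2, x.1.erase x.2⟩)
          (fun y => (⟨insert y.1 y.2, y.1⟩ : (T : Finset V) × V))
        · intro x hx
          rw [Finset.mem_sigma] at hx ⊢
          rw [Finset.mem_powersetCard] at hx ⊢
          obtain ⟨⟨hsub, hcard⟩, hmem⟩ := hx
          refine ⟨hsub hmem, ?_, ?_⟩
          · exact fun v hv => Finset.mem_erase.2
              ⟨(Finset.mem_erase.1 hv).1, hsub (Finset.mem_of_mem_erase hv)⟩
          · rw [Finset.card_erase_of_mem hmem, hcard]; omega
        · intro y hy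
          rw [Finset.mem_sigma] at hy ⊢
          obtain ⟨hw, hT'⟩ := hy
          rw [Finset.mem_powersetCard] at hT'
          have hnot : y.1 ∉ y.2 := fun h => (Finset.mem_erase.1 (hT'.1 h)).1 rfl
          rw [Finset.mem_powersetCard]
          refine ⟨⟨?_, ?_⟩, Finset.mem_insert_self _ _⟩
          · intro v hv
            rcases Finset.mem_insert.1 hv with h | h
            · exact h ▸ hw
            · exact Finset.mem_of_mem_erase (hT'.1 h)
          · rw [Finset.card_insert_of_notMem hnot, hT'.2]
        · intro x hx
          rw [Finset.mem_sigma] at hx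
          exact Sigma.ext (Finset.insert_erase hx.2) (by simp)
        · intro y hy
          rw [Finset.mem_sigma] at hy
          have hnot : y.1 ∉ y.2 := fun h =>
            (Finset.mem_erase.1 ((Finset.mem_powersetCard.1 hy.2).1 h)).1 rfl
          exact Sigma.ext (by simp) (by simp [Finset.erase_insert hnot])
        · intro x hx
          simp
      have step3 : ∑ w ∈ S, ∑ T' ∈ (S.erase w).powersetCard m, p w * ∏ v ∈ T', p v
          ≤ (∑ v ∈ S, p v) * ∑ T ∈ S.powersetCard m, ∏ v ∈ T, p v := by
        rw [Finset.sum_mul]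
        apply Finset.sum_le_sum
        intro w hw
        rw [← Finset.mul_sum]
        apply mul_le_mul_of_nonneg_left _ (hp w)
        apply Finset.sum_le_sum_of_subset_of_nonneg
          (Finset.powersetCard_mono (Finset.erase_subset w S))
        intro T _ _
        exact Finset.prod_nonneg fun v _ => hp v
      rw [step1, step2]
      exact step3
    have hfP : (0:ℝ) ≤ (Nat.factorial m : ℝ) := by positivity
    calc ((m+1).factorial : ℝ) * ∑ T ∈ S.powersetCard (m+1), ∏ v ∈ T, p v
        = (Nat.factorial m : ℝ) * (((m:ℝ)+1) * ∑ T ∈ S.powersetCard (m+1), ∏ v ∈ T, p v) := by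
          rw [Nat.factorial_succ]; push_cast; ring
      _ ≤ (Nat.factorial m : ℝ) * ((∑ v ∈ S, p v) * ∑ T ∈ S.powersetCard m, ∏ v ∈ T, p v) :=
          mul_le_mul_of_nonneg_left key hfP
      _ = (∑ v ∈ S, p v) * ((Nat.factorial m : ℝ) * ∑ T ∈ S.powersetCard m, ∏ v ∈ T, p v) := by
          ring
      _ ≤ (∑ v ∈ S, p v) * (∑ v ∈ S, p v) ^ m := mul_le_mul_of_nonneg_left ih hmu
      _ = (∑ v ∈ S, p v) ^ (m+1) := by ring

end AUX

/-- A finite family of random variables is `k`-wise independent if every subfamily of at most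
`k` of them is mutually independent. -/
def KWiseIndepFun {Ω ι β : Type*} [MeasurableSpace Ω] [MeasurableSpace β]
    (k : ℕ) (X : ι → Ω → β) (P : Measure Ω) : Prop :=
  ∀ S : Finset ι, S.card ≤ k →
    iIndepFun (fun i : S => X i) P

/-- Let `d ≥ 2` be a real number, let `S ⊆ V` be a set of vertices, each of degree in `[d, 2d)`,
with `|S| ≥ 6·d^{0.6}`, and let `k` be an even integer with `4 ≤ k ≤ d^{0.1}`. Each vertex `w`
with `deg(w) ≥ 1` is sampled with probability `deg(w)^{-1/2}`, with `k`-wise independent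
sampling indicators. Then the probability that fewer than `d^{0.1}` vertices of `S` are sampled
is at most `8·(2k/d^{0.1})^(k/2)`. -/
theorem many_sampled_in_S {V Ω : Type*} [Fintype V] [DecidableEq V] [MeasurableSpace Ω]
    (G : SimpleGraph V) [DecidableRel G.Adj]
    (P : Measure Ω) [IsProbabilityMeasure P]
    (Vsamp : Ω → Finset V)
    (hmeas : ∀ w : V, MeasurableSet {ω | w ∈ Vsamp ω})
    (hprob : ∀ w : V, 1 ≤ G.degree w →
      (P {ω | w ∈ Vsamp ω}).toReal = (G.degree w : ℝ) ^ (-(1 : ℝ) / 2))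
    (k : ℕ) (hk4 : 4 ≤ k) (hkeven : Even k)
    (hindep : KWiseIndepFun k (fun (w : V) (ω : Ω) => if w ∈ Vsamp ω then (1 : ℝ) else 0) P)
    (d : ℝ) (hd : 2 ≤ d)
    (S : Finset V)
    (hSdeg : ∀ w ∈ S, d ≤ (G.degree w : ℝ) ∧ (G.degree w : ℝ) < 2 * d)
    (hScard : 6 * d ^ ((3 : ℝ) / 5) ≤ (S.card : ℝ))
    (hk : (k : ℝ) ≤ d ^ ((1 : ℝ) / 10)) :
    (P {ω | ((S.filter (fun w => w ∈ Vsamp ω)).card : ℝ) < d ^ ((1 : ℝ) / 10)}).toReal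
      ≤ 8 * (2 * (k : ℝ) / d ^ ((1 : ℝ) / 10)) ^ ((k : ℝ) / 2) := by
  classical
  obtain ⟨r, hr⟩ := hkeven
  obtain ⟨M, hkM⟩ : ∃ M, k = 2 * M := ⟨r, by omega⟩
  have hM2 : 2 ≤ M := by omega
  set t : ℝ := d ^ ((1 : ℝ) / 10) with ht_def
  set X : V → Ω → ℝ := fun w ω => if w ∈ Vsamp ω then (1 : ℝ) else 0 with hX_def
  set p : V → ℝ := fun w => (P {ω | w ∈ Vsamp ω}).toReal with hp_def
  set Y : V → Ω → ℝ := fun w ω => X w ω - p w with hY_def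
  set μ : ℝ := ∑ w ∈ S, p w with hmu_def
  have hd0 : (0 : ℝ) < d := by linarith
  have ht0 : 0 < t := Real.rpow_pos_of_pos hd0 _
  have htk : (4 : ℝ) ≤ t := le_trans (by exact_mod_cast hk4) hk
  -- basic properties of p
  have hp0 : ∀ w, 0 ≤ p w := fun w => ENNReal.toReal_nonneg
  have hp1 : ∀ w, p w ≤ 1 := by
    intro w
    have := prob_le_one (μ := P) (s := {ω | w ∈ Vsamp ω})
    simpa [hp_def] using ENNReal.toReal_mono ENNReal.one_ne_top this
  -- measurability and bounds
  have hXmeas : ∀ w, Measurable (X w) := fun w =>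
    Measurable.ite (hmeas w) measurable_const measurable_const
  have hX01 : ∀ w ω, 0 ≤ X w ω ∧ X w ω ≤ 1 := by
    intro w ω; simp only [hX_def]; split_ifs <;> norm_num
  have hYmeas : ∀ w, Measurable (Y w) := fun w => (hXmeas w).sub measurable_const
  have hYbdd : ∀ w ω, |Y w ω| ≤ 1 := by
    intro w ω
    have h1 := hX01 w ω
    have h2 := hp0 w
    have h3 := hp1 w
    rw [abs_le]
    constructor <;> simp only [hY_def] <;> linarith
  -- expectation of X and Y
  have hEX : ∀ w, ∫ ω, X w ω ∂P = p w := by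
    intro w
    have h1 : X w = fun ω => ({ω | w ∈ Vsamp ω} : Set Ω).indicator (fun _ => (1:ℝ)) ω := by
      funext ω; simp [hX_def, Set.indicator_apply]
    rw [h1, integral_indicator_const (1:ℝ) (hmeas w)]
    simp [hp_def, measureReal_def]
  have hXint : ∀ w, Integrable (X w) P := fun w =>
    aux_integrable_of_bdd P (hXmeas w) 1
      (fun ω => by have := hX01 w ω; rw [abs_le]; constructor <;> linarith)
  have hEY : ∀ w, ∫ ω, Y w ω ∂P = 0 := by
    intro w
    simp only [hY_def]
    rw [integral_sub (hXint w) (integrable_const _), hEX, integral_const]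
    simp
  -- second and higher moments
  have hEYm : ∀ w, ∀ m : ℕ, 2 ≤ m → |∫ ω, (Y w ω) ^ m ∂P| ≤ p w := by
    intro w m hm
    have hintm : Integrable (fun ω => |(Y w ω) ^ m|) P :=
      aux_integrable_of_bdd P ((hYmeas w).pow_const m).abs 1 (fun ω => by
        rw [abs_abs, abs_pow]
        exact pow_le_one₀ (abs_nonneg _) (hYbdd w ω))
    have hint2 : Integrable (fun ω => (Y w ω) ^ 2) P :=
      aux_integrable_of_bdd P ((hYmeas w).pow_const 2) 1 (fun ω => by
        rw [abs_pow]
        exact pow_le_one₀ (abs_nonneg _) (hYbdd w ω))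
    have habs : |∫ ω, (Y w ω) ^ m ∂P| ≤ ∫ ω, |(Y w ω) ^ m| ∂P := by
      simpa [Real.norm_eq_abs] using
        norm_integral_le_integral_norm (μ := P) (fun ω => (Y w ω) ^ m)
    have hptw : ∀ ω, |(Y w ω) ^ m| ≤ (Y w ω) ^ 2 := by
      intro ω
      rw [abs_pow]
      calc |Y w ω| ^ m ≤ |Y w ω| ^ 2 :=
            pow_le_pow_of_le_one (abs_nonneg _) (hYbdd w ω) hm
        _ = (Y w ω) ^ 2 := sq_abs _
    have hmono : ∫ ω, |(Y w ω) ^ m| ∂P ≤ ∫ ω, (Y w ω) ^ 2 ∂P :=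
      integral_mono hintm hint2 hptw
    have hsq : ∀ ω, (Y w ω) ^ 2 = X w ω * (1 - 2 * p w) + (p w) ^ 2 := by
      intro ω
      simp only [hY_def, hX_def]
      split_ifs <;> ring
    have hEsq : ∫ ω, (Y w ω) ^ 2 ∂P = p w - (p w) ^ 2 := by
      calc ∫ ω, (Y w ω) ^ 2 ∂P = ∫ ω, (X w ω * (1 - 2 * p w) + (p w) ^ 2) ∂P := by
            apply integral_congr_ae
            filter_upwards with ω using hsq ω
        _ = (∫ ω, X w ω * (1 - 2 * p w) ∂P) + ∫ _, (p w) ^ 2 ∂P :=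
            integral_add ((hXint w).mul_const _) (integrable_const _)
        _ = (∫ ω, X w ω ∂P) * (1 - 2 * p w) + (p w) ^ 2 := by
            rw [integral_mul_const, integral_const]
            simp
        _ = p w - (p w) ^ 2 := by rw [hEX]; ring
    have hp2 : 0 ≤ (p w) ^ 2 := sq_nonneg _
    calc |∫ ω, (Y w ω) ^ m ∂P| ≤ ∫ ω, |(Y w ω) ^ m| ∂P := habs
      _ ≤ ∫ ω, (Y w ω) ^ 2 ∂P := hmono
      _ = p w - (p w) ^ 2 := hEsq
      _ ≤ p w := by linarith
  -- lower bound on μ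
  have hmu4t : 4 * t ≤ μ := by
    have hdegp : ∀ w ∈ S, (2 * d) ^ (-(1:ℝ)/2) ≤ p w := by
      intro w hw
      obtain ⟨h1, h2⟩ := hSdeg w hw
      have hdegpos : (0 : ℝ) < (G.degree w : ℝ) := by linarith
      have hdeg1 : 1 ≤ G.degree w := by exact_mod_cast hdegpos
      have hpw : p w = (G.degree w : ℝ) ^ (-(1:ℝ)/2) := hprob w hdeg1
      rw [hpw]
      exact Real.rpow_le_rpow_of_nonpos hdegpos (le_of_lt h2) (by norm_num)
    have hsum : (S.card : ℝ) * ((2 * d) ^ (-(1:ℝ)/2)) ≤ μ := by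
      rw [hmu_def]
      have := Finset.card_nsmul_le_sum S p ((2 * d) ^ (-(1:ℝ)/2)) hdegp
      rwa [nsmul_eq_mul] at this
    set c2 : ℝ := (2 : ℝ) ^ (-(1:ℝ)/2) with hc2_def
    have hc2pos : 0 < c2 := Real.rpow_pos_of_pos (by norm_num) _
    have hc2sq : c2 * c2 = 1 / 2 := by
      rw [hc2_def, ← Real.rpow_add (by norm_num : (0:ℝ) < 2)]
      norm_num
    have h6c2 : 4 ≤ 6 * c2 := by nlinarith [hc2pos, hc2sq]
    have hsplit : (2 * d) ^ (-(1:ℝ)/2) = c2 * d ^ (-(1:ℝ)/2) := by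
      rw [hc2_def, ← Real.mul_rpow (by norm_num : (0:ℝ) ≤ 2) hd0.le]
    have hdpow : d ^ ((3:ℝ)/5) * d ^ (-(1:ℝ)/2) = t := by
      rw [ht_def, ← Real.rpow_add hd0]
      norm_num
    have hcpos : (0:ℝ) < (2 * d) ^ (-(1:ℝ)/2) := Real.rpow_pos_of_pos (by linarith) _
    have h2 : 6 * d ^ ((3:ℝ)/5) * ((2 * d) ^ (-(1:ℝ)/2)) ≤ μ :=
      le_trans (mul_le_mul_of_nonneg_right hScard hcpos.le) hsum
    have h3 : 6 * d ^ ((3:ℝ)/5) * ((2 * d) ^ (-(1:ℝ)/2)) = 6 * c2 * t := by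
      rw [hsplit, ← hdpow]
      ring
    have htpos : 0 < t := ht0
    nlinarith [h2, h3, h6c2, htpos]
  have hevenk : Even k := by rw [hkM]; exact even_two_mul M
  set A : ℝ := μ - t with hA_def
  have hmupos : 0 < μ := by nlinarith
  have hA34 : 3 / 4 * μ ≤ A := by rw [hA_def]; nlinarith
  have hA0 : 0 < A := by nlinarith
  set W : Ω → ℝ := fun ω => ∑ w ∈ S, Y w ω with hW_def
  have hWmeas : Measurable W := Finset.measurable_sum S (fun w _ => hYmeas w)
  have hWbdd : ∀ ω, |W ω| ≤ (S.card : ℝ) := by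
    intro ω
    calc |∑ w ∈ S, Y w ω| ≤ ∑ w ∈ S, |Y w ω| := Finset.abs_sum_le_sum_abs _ _
      _ ≤ ∑ w ∈ S, 1 := Finset.sum_le_sum (fun w _ => hYbdd w ω)
      _ = (S.card : ℝ) := by simp
  have hWkmeas : Measurable (fun ω => W ω ^ k) := hWmeas.pow_const k
  have hWkint : Integrable (fun ω => W ω ^ k) P :=
    aux_integrable_of_bdd P hWkmeas ((S.card : ℝ) ^ k) (fun ω => by
      rw [abs_pow]
      exact pow_le_pow_left₀ (abs_nonneg _) (hWbdd ω) k)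
  have hWknn : ∀ ω, 0 ≤ W ω ^ k := fun ω => hevenk.pow_nonneg _
  have hsub : {ω | ((S.filter (fun w => w ∈ Vsamp ω)).card : ℝ) < t}
      ⊆ {ω | A ^ k ≤ W ω ^ k} := by
    intro ω hω
    simp only [Set.mem_setOf_eq] at hω ⊢
    have hXsum : ∑ w ∈ S, X w ω = ((S.filter (fun w => w ∈ Vsamp ω)).card : ℝ) := by
      simp only [hX_def]
      rw [Finset.sum_boole]
    have hWω : W ω = ((S.filter (fun w => w ∈ Vsamp ω)).card : ℝ) - μ := by
      simp only [hW_def, hY_def, Finset.sum_sub_distrib, hXsum, hmu_def]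
    have hWabs : A ≤ |W ω| := by
      rw [hWω, abs_sub_comm]
      rw [abs_of_nonneg (by nlinarith : (0:ℝ) ≤ μ - ((S.filter (fun w => w ∈ Vsamp ω)).card : ℝ))]
      rw [hA_def]
      linarith
    calc A ^ k ≤ |W ω| ^ k := pow_le_pow_left₀ hA0.le hWabs k
      _ = W ω ^ k := hevenk.pow_abs _
  have hmarkov : (P {ω | ((S.filter (fun w => w ∈ Vsamp ω)).card : ℝ) < t}).toReal
      ≤ (∫ ω, W ω ^ k ∂P) / A ^ k := by
    have h1 := mul_meas_ge_le_integral_of_nonneg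
      (Filter.Eventually.of_forall hWknn) hWkint (A ^ k)
    have h2 : (P {ω | ((S.filter (fun w => w ∈ Vsamp ω)).card : ℝ) < t}).toReal
        ≤ (P {ω | A ^ k ≤ W ω ^ k}).toReal :=
      ENNReal.toReal_mono (measure_ne_top P _) (measure_mono hsub)
    have hAk0 : (0:ℝ) < A ^ k := pow_pos hA0 k
    refine le_trans h2 ?_
    rw [le_div_iff₀ hAk0]
    calc (P {ω | A ^ k ≤ W ω ^ k}).toReal * A ^ k
        = A ^ k * (P {ω | A ^ k ≤ W ω ^ k}).toReal := by ring
      _ ≤ ∫ ω, W ω ^ k ∂P := h1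
  have hMmu : (M:ℝ) ≤ μ := by
    have h1 : (M:ℝ) ≤ (k:ℝ) := by exact_mod_cast Nat.le_of_lt_succ (by omega)
    linarith
  have hmoment : ∫ ω, W ω ^ k ∂P ≤ (6 * (M:ℝ) * μ) ^ M := by
    set F : (Fin k → V) → ℝ := fun g => ∫ ω, ∏ j, Y (g j) ω ∂P with hF_def
    set mult : (Fin k → V) → V → ℕ :=
      fun g w => (Finset.univ.filter (fun j => g j = w)).card with hmult_def
    have htupmeas : ∀ g : Fin k → V, Measurable (fun ω => ∏ j, Y (g j) ω) :=
      fun g => Finset.measurable_prod _ (fun j _ => hYmeas (g j))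
    have htupbdd : ∀ (g : Fin k → V) (ω : Ω), |∏ j, Y (g j) ω| ≤ 1 := fun g ω => by
      rw [Finset.abs_prod]
      exact Finset.prod_le_one (fun j _ => abs_nonneg _) (fun j _ => hYbdd (g j) ω)
    have htupint : ∀ g : Fin k → V, Integrable (fun ω => ∏ j, Y (g j) ω) P :=
      fun g => aux_integrable_of_bdd P (htupmeas g) 1 (htupbdd g)
    have hexpand : ∫ ω, W ω ^ k ∂P = ∑ g ∈ Fintype.piFinset (fun _ : Fin k => S), F g := by
      have h1 : ∀ ω, W ω ^ k = ∑ g ∈ Fintype.piFinset (fun _ : Fin k => S), ∏ j, Y (g j) ω := by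
        intro ω
        have h2 : W ω ^ k = ∏ _j : Fin k, W ω := by
          rw [Finset.prod_const]
          simp
        rw [h2]
        simp only [hW_def]
        rw [Finset.prod_univ_sum]
      calc ∫ ω, W ω ^ k ∂P
          = ∫ ω, ∑ g ∈ Fintype.piFinset (fun _ : Fin k => S), ∏ j, Y (g j) ω ∂P := by
            apply integral_congr_ae
            filter_upwards with ω using h1 ω
        _ = ∑ g ∈ Fintype.piFinset (fun _ : Fin k => S), F g :=
            integral_finset_sum _ (fun g _ => htupint g)
    have hfact : ∀ g : Fin k → V,
        F g = ∏ w ∈ Finset.image g Finset.univ, ∫ ω, (Y w ω) ^ (mult g w) ∂P := by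
      intro g
      have hTcard : (Finset.image g Finset.univ).card ≤ k :=
        le_trans Finset.card_image_le (by simp)
      have hptw : ∀ ω, ∏ j, Y (g j) ω
          = ∏ w ∈ Finset.image g Finset.univ, (Y w ω) ^ (mult g w) := by
        intro ω
        rw [← Finset.prod_fiberwise_of_maps_to
          (fun j (_ : j ∈ Finset.univ) => Finset.mem_image_of_mem g (Finset.mem_univ j))
          (fun j => Y (g j) ω)]
        apply Finset.prod_congr rfl
        intro w _
        have : ∀ j ∈ Finset.univ.filter (fun j => g j = w), Y (g j) ω = Y w ω := by
          intro j hj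
          rw [(Finset.mem_filter.1 hj).2]
        rw [Finset.prod_congr rfl this, Finset.prod_const]
      have hind0 := hindep (Finset.image g Finset.univ) hTcard
      have hindZ := hind0.comp
        (fun i : (Finset.image g Finset.univ : Finset V) =>
          fun x : ℝ => (x - p i.1) ^ (mult g i.1))
        (fun i => (measurable_id.sub_const _).pow_const _)
      have hfac := aux_integral_indep_prod
        (fun i : (Finset.image g Finset.univ : Finset V) =>
          fun ω => (X i.1 ω - p i.1) ^ (mult g i.1))
        hindZ
        (fun i => ((hXmeas i.1).sub_const _).pow_const _)
        (fun i ω => by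
          rw [abs_pow]
          apply pow_le_one₀ (abs_nonneg _)
          exact hYbdd i.1 ω)
      calc F g = ∫ ω, ∏ w ∈ Finset.image g Finset.univ, (Y w ω) ^ (mult g w) ∂P := by
            apply integral_congr_ae
            filter_upwards with ω using hptw ω
        _ = ∫ ω, ∏ i : (Finset.image g Finset.univ : Finset V),
              (X i.1 ω - p i.1) ^ (mult g i.1) ∂P := by
            apply integral_congr_ae
            filter_upwards with ω
            rw [← Finset.prod_coe_sort]
        _ = ∏ i : (Finset.image g Finset.univ : Finset V),
              ∫ ω, (X i.1 ω - p i.1) ^ (mult g i.1) ∂P := hfac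
        _ = ∏ w ∈ Finset.image g Finset.univ, ∫ ω, (Y w ω) ^ (mult g w) ∂P := by
            rw [← Finset.prod_coe_sort (Finset.image g Finset.univ)
              (fun w => ∫ ω, (Y w ω) ^ (mult g w) ∂P)]
    set B := (Fintype.piFinset (fun _ : Fin k => S)).filter
      (fun g => ∀ w ∈ Finset.image g Finset.univ, 2 ≤ mult g w) with hB_def
    have hmult1 : ∀ (g : Fin k → V), ∀ w ∈ Finset.image g Finset.univ, 1 ≤ mult g w := by
      intro g w hw
      obtain ⟨j, _, hj⟩ := Finset.mem_image.1 hw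
      exact Finset.card_pos.2 ⟨j, Finset.mem_filter.2 ⟨Finset.mem_univ j, hj⟩⟩
    have hzero : ∀ g ∈ Fintype.piFinset (fun _ : Fin k => S), g ∉ B → F g = 0 := by
      intro g hg hgB
      rw [hB_def, Finset.mem_filter] at hgB
      push_neg at hgB
      obtain ⟨w, hw, hlt⟩ := hgB hg
      have hm1 : mult g w = 1 := by
        have := hmult1 g w hw
        omega
      rw [hfact g]
      apply Finset.prod_eq_zero hw
      rw [hm1]
      simp only [pow_one]
      exact hEY w
    have hFbound : ∀ g ∈ B, F g ≤ ∏ w ∈ Finset.image g Finset.univ, p w := by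
      intro g hg
      have hg2 := (Finset.mem_filter.1 hg).2
      calc F g ≤ |F g| := le_abs_self _
        _ = |∏ w ∈ Finset.image g Finset.univ, ∫ ω, (Y w ω) ^ (mult g w) ∂P| := by
            rw [hfact g]
        _ = ∏ w ∈ Finset.image g Finset.univ, |∫ ω, (Y w ω) ^ (mult g w) ∂P| :=
            Finset.abs_prod _ _
        _ ≤ ∏ w ∈ Finset.image g Finset.univ, p w :=
            Finset.prod_le_prod (fun w _ => abs_nonneg _)
              (fun w hw => hEYm w (mult g w) (hg2 w hw))
    have himcard : ∀ g ∈ B, (Finset.image g Finset.univ).card ≤ M := by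
      intro g hg
      have hg2 := (Finset.mem_filter.1 hg).2
      have hcount : (Finset.univ : Finset (Fin k)).card
          = ∑ w ∈ Finset.image g Finset.univ, mult g w :=
        Finset.card_eq_sum_card_fiberwise
          (fun j (_ : j ∈ Finset.univ) => Finset.mem_image_of_mem g (Finset.mem_univ j))
      have hlow : 2 * (Finset.image g Finset.univ).card
          ≤ ∑ w ∈ Finset.image g Finset.univ, mult g w := by
        calc 2 * (Finset.image g Finset.univ).card
            = ∑ _w ∈ Finset.image g Finset.univ, 2 := by
              rw [Finset.sum_const]; ring
          _ ≤ ∑ w ∈ Finset.image g Finset.univ, mult g w :=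
              Finset.sum_le_sum hg2
      have hku : (Finset.univ : Finset (Fin k)).card = k := by simp
      omega
    have hsplit : ∑ g ∈ Fintype.piFinset (fun _ : Fin k => S), F g = ∑ g ∈ B, F g :=
      (Finset.sum_subset (Finset.filter_subset _ _) hzero).symm
    have hppos : ∀ (T : Finset V), (0:ℝ) ≤ ∏ w ∈ T, p w :=
      fun T => Finset.prod_nonneg (fun w _ => hp0 w)
    set tset := S.powerset.filter (fun T => 1 ≤ T.card ∧ T.card ≤ M) with htset_def
    have hmaps : ∀ g ∈ B, Finset.image g Finset.univ ∈ tset := by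
      intro g hg
      have hgpi : g ∈ Fintype.piFinset (fun _ : Fin k => S) := (Finset.mem_filter.1 hg).1
      rw [htset_def, Finset.mem_filter, Finset.mem_powerset]
      refine ⟨?_, ?_, himcard g hg⟩
      · intro w hw
        obtain ⟨j, _, hj⟩ := Finset.mem_image.1 hw
        have := Fintype.mem_piFinset.1 hgpi j
        rwa [hj] at this
      · have hk0 : 0 < k := by omega
        have : g ⟨0, hk0⟩ ∈ Finset.image g Finset.univ :=
          Finset.mem_image_of_mem g (Finset.mem_univ _)
        exact Finset.card_pos.2 ⟨_, this⟩
    have hgroup : ∑ g ∈ B, ∏ w ∈ Finset.image g Finset.univ, p w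
        = ∑ T ∈ tset, ∑ g ∈ B.filter (fun g => Finset.image g Finset.univ = T),
            ∏ w ∈ Finset.image g Finset.univ, p w :=
      (Finset.sum_fiberwise_of_maps_to hmaps _).symm
    have hinner : ∀ T ∈ tset,
        ∑ g ∈ B.filter (fun g => Finset.image g Finset.univ = T),
          ∏ w ∈ Finset.image g Finset.univ, p w ≤ (M:ℝ)^k * ∏ w ∈ T, p w := by
      intro T hT
      have hTM : T.card ≤ M := ((Finset.mem_filter.1 hT).2).2
      have hcongr : ∀ g ∈ B.filter (fun g => Finset.image g Finset.univ = T),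
          ∏ w ∈ Finset.image g Finset.univ, p w = ∏ w ∈ T, p w := by
        intro g hg
        rw [(Finset.mem_filter.1 hg).2]
      rw [Finset.sum_congr rfl hcongr, Finset.sum_const, nsmul_eq_mul]
      apply mul_le_mul_of_nonneg_right _ (hppos T)
      have hsubset : B.filter (fun g => Finset.image g Finset.univ = T)
          ⊆ Fintype.piFinset (fun _ : Fin k => T) := by
        intro g hg
        rw [Fintype.mem_piFinset]
        intro j
        have h1 : g j ∈ Finset.image g Finset.univ :=
          Finset.mem_image_of_mem g (Finset.mem_univ j)
        rwa [(Finset.mem_filter.1 hg).2] at h1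
      have hcard1 := Finset.card_le_card hsubset
      rw [Fintype.card_piFinset] at hcard1
      simp only [Finset.prod_const, Finset.card_univ, Fintype.card_fin] at hcard1
      calc ((B.filter (fun g => Finset.image g Finset.univ = T)).card : ℝ)
          ≤ ((T.card ^ k : ℕ) : ℝ) := by exact_mod_cast hcard1
        _ ≤ ((M ^ k : ℕ) : ℝ) := by exact_mod_cast Nat.pow_le_pow_left hTM k
        _ = (M:ℝ) ^ k := by push_cast; ring
    have hMfacpos : (0:ℝ) < (M.factorial : ℝ) := by exact_mod_cast M.factorial_pos
    have hterm : ∀ m ∈ Finset.Icc 1 M,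
        ∑ T ∈ tset.filter (fun T => T.card = m), ∏ w ∈ T, p w
          ≤ μ ^ M / (M.factorial : ℝ) := by
      intro m hm
      obtain ⟨hm1, hmM⟩ := Finset.mem_Icc.1 hm
      have hsub2 : tset.filter (fun T => T.card = m) ⊆ S.powersetCard m := by
        intro T hT
        rw [Finset.mem_powersetCard]
        have h1 := Finset.mem_filter.1 hT
        exact ⟨Finset.mem_powerset.1 (Finset.mem_filter.1 h1.1).1, h1.2⟩
      have h2 : ∑ T ∈ tset.filter (fun T => T.card = m), ∏ w ∈ T, p w
          ≤ ∑ T ∈ S.powersetCard m, ∏ w ∈ T, p w :=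
        Finset.sum_le_sum_of_subset_of_nonneg hsub2 (fun T _ _ => hppos T)
      have hmfacpos : (0:ℝ) < (m.factorial : ℝ) := by exact_mod_cast m.factorial_pos
      have h3 : ∑ T ∈ S.powersetCard m, ∏ w ∈ T, p w ≤ μ ^ m / (m.factorial : ℝ) := by
        rw [le_div_iff₀ hmfacpos]
        have h31 := aux_esymm_le p hp0 S m
        rw [← hmu_def] at h31
        linarith [h31]
      have h4 : μ ^ m / (m.factorial : ℝ) ≤ μ ^ M / (M.factorial : ℝ) := by
        rw [div_le_div_iff₀ hmfacpos hMfacpos]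
        have h5 : (M.factorial : ℝ) ≤ (m.factorial : ℝ) * (M:ℝ) ^ (M - m) := by
          exact_mod_cast aux_factorial_ratio hmM
        have h6 : (M:ℝ) ^ (M - m) ≤ μ ^ (M - m) :=
          pow_le_pow_left₀ (by positivity) hMmu _
        have h7 : μ ^ (M - m) * μ ^ m = μ ^ M := by
          rw [← pow_add]
          congr 1
          omega
        have hμm : (0:ℝ) ≤ μ ^ m := pow_nonneg hmupos.le m
        calc μ ^ m * (M.factorial : ℝ) ≤ μ ^ m * ((m.factorial : ℝ) * (M:ℝ) ^ (M - m)) :=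
              mul_le_mul_of_nonneg_left h5 hμm
          _ ≤ μ ^ m * ((m.factorial : ℝ) * μ ^ (M - m)) := by
              apply mul_le_mul_of_nonneg_left _ hμm
              exact mul_le_mul_of_nonneg_left h6 (by positivity)
          _ = μ ^ M * (m.factorial : ℝ) := by rw [← h7]; ring
      linarith [h2, h3, h4]
    have hmaps2 : ∀ T ∈ tset, T.card ∈ Finset.Icc 1 M := by
      intro T hT
      exact Finset.mem_Icc.2 (Finset.mem_filter.1 hT).2
    have hgroup2 : ∑ T ∈ tset, ∏ w ∈ T, p w
        = ∑ m ∈ Finset.Icc 1 M, ∑ T ∈ tset.filter (fun T => T.card = m), ∏ w ∈ T, p w :=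
      (Finset.sum_fiberwise_of_maps_to hmaps2 _).symm
    have htsetsum : ∑ T ∈ tset, ∏ w ∈ T, p w ≤ (M:ℝ) * (μ ^ M / (M.factorial : ℝ)) := by
      rw [hgroup2]
      calc ∑ m ∈ Finset.Icc 1 M, ∑ T ∈ tset.filter (fun T => T.card = m), ∏ w ∈ T, p w
          ≤ ∑ _m ∈ Finset.Icc 1 M, μ ^ M / (M.factorial : ℝ) := Finset.sum_le_sum hterm
        _ = (M:ℝ) * (μ ^ M / (M.factorial : ℝ)) := by
            rw [Finset.sum_const, nsmul_eq_mul, Nat.card_Icc]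
            simp
    have hfinalM : (M:ℝ) ^ k * ((M:ℝ) * (μ ^ M / (M.factorial : ℝ))) ≤ (6 * (M:ℝ) * μ) ^ M := by
      have h2 : (M:ℝ) ≤ 2 ^ M := by exact_mod_cast (Nat.lt_two_pow_self (n := M)).le
      have h1 : (M:ℝ) ^ (M+1) ≤ 6 ^ M * (M.factorial : ℝ) := by
        calc (M:ℝ) ^ (M+1) = (M:ℝ) * (M:ℝ) ^ M := by ring
          _ ≤ 2 ^ M * (3 ^ M * (M.factorial : ℝ)) := by
              apply mul_le_mul h2 (aux_pow_self_le M) (by positivity) (by positivity)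
          _ = 6 ^ M * (M.factorial : ℝ) := by
              rw [← mul_assoc, ← mul_pow]
              norm_num
      have e1 : (M:ℝ) ^ k * ((M:ℝ) * (μ ^ M / (M.factorial : ℝ)))
          = ((M:ℝ) ^ (M+1) / (M.factorial : ℝ)) * ((M:ℝ) ^ M * μ ^ M) := by
        rw [hkM]
        field_simp
        ring
      have e2 : (M:ℝ) ^ (M+1) / (M.factorial : ℝ) ≤ 6 ^ M := by
        rw [div_le_iff₀ hMfacpos]
        linarith [h1]
      have e3 : (6 * (M:ℝ) * μ) ^ M = 6 ^ M * ((M:ℝ) ^ M * μ ^ M) := by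
        rw [mul_pow, mul_pow]
        ring
      rw [e1, e3]
      apply mul_le_mul_of_nonneg_right e2
      exact mul_nonneg (by positivity) (pow_nonneg hmupos.le M)
    calc ∫ ω, W ω ^ k ∂P = ∑ g ∈ B, F g := by rw [hexpand, hsplit]
      _ ≤ ∑ g ∈ B, ∏ w ∈ Finset.image g Finset.univ, p w := Finset.sum_le_sum hFbound
      _ = ∑ T ∈ tset, ∑ g ∈ B.filter (fun g => Finset.image g Finset.univ = T),
            ∏ w ∈ Finset.image g Finset.univ, p w := hgroup
      _ ≤ ∑ T ∈ tset, (M:ℝ)^k * ∏ w ∈ T, p w := Finset.sum_le_sum hinner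
      _ = (M:ℝ)^k * ∑ T ∈ tset, ∏ w ∈ T, p w := by rw [Finset.mul_sum]
      _ ≤ (M:ℝ)^k * ((M:ℝ) * (μ ^ M / (M.factorial : ℝ))) := by
          apply mul_le_mul_of_nonneg_left htsetsum (by positivity)
      _ ≤ (6 * (M:ℝ) * μ) ^ M := hfinalM
  have hk2M : (k : ℝ) = 2 * (M:ℝ) := by exact_mod_cast hkM
  have hM0 : (0:ℝ) < (M:ℝ) := by exact_mod_cast (by omega : 0 < M)
  have hfinal : (∫ ω, W ω ^ k ∂P) / A ^ k ≤ 8 * (2 * (k:ℝ) / t) ^ M := by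
    have hA2 : (3 / 4 * μ) ^ 2 ≤ A ^ 2 := pow_le_pow_left₀ (by linarith) hA34 2
    have hbase : 6 * (M:ℝ) * μ ≤ (2 * (k:ℝ) / t) * A ^ 2 := by
      rw [hk2M, div_mul_eq_mul_div, le_div_iff₀ ht0]
      have ht4 : t ≤ μ / 4 := by linarith
      have h2 : 6 * (M:ℝ) * μ * t ≤ 6 * (M:ℝ) * μ * (μ / 4) :=
        mul_le_mul_of_nonneg_left ht4 (by nlinarith [hM0, hmupos])
      have h1 : (M:ℝ) * (3 / 4 * μ) ^ 2 ≤ (M:ℝ) * A ^ 2 :=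
        mul_le_mul_of_nonneg_left hA2 hM0.le
      have hz : (0:ℝ) ≤ (M:ℝ) * A ^ 2 := mul_nonneg hM0.le (sq_nonneg A)
      clear_value A μ t
      nlinarith [h1, h2, hz]
    have hAk : A ^ k = (A ^ 2) ^ M := by rw [hkM, pow_mul]
    have hpow : (6 * (M:ℝ) * μ) ^ M ≤ (2 * (k:ℝ) / t) ^ M * (A ^ 2) ^ M := by
      rw [← mul_pow]
      exact pow_le_pow_left₀ (by nlinarith [hM0, hmupos]) hbase M
    have hAk0 : (0:ℝ) < A ^ k := pow_pos hA0 k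
    rw [div_le_iff₀ hAk0]
    have hq0 : (0:ℝ) ≤ (2 * (k:ℝ) / t) ^ M := by
      apply pow_nonneg
      have hk0 : (0:ℝ) ≤ (k:ℝ) := by positivity
      positivity
    calc ∫ ω, W ω ^ k ∂P ≤ (6 * (M:ℝ) * μ) ^ M := hmoment
      _ ≤ (2 * (k:ℝ) / t) ^ M * (A ^ 2) ^ M := hpow
      _ = (2 * (k:ℝ) / t) ^ M * A ^ k := by rw [hAk]
      _ ≤ 8 * (2 * (k:ℝ) / t) ^ M * A ^ k := by nlinarith [hAk0, hq0]
  have hrpow : (8 : ℝ) * (2 * (k:ℝ) / t) ^ ((k:ℝ) / 2) = 8 * (2 * (k:ℝ) / t) ^ M := by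
    have hexp : ((k:ℝ) / 2) = ((M : ℕ) : ℝ) := by rw [hk2M]; ring
    rw [hexp, Real.rpow_natCast]
  rw [hrpow]
  exact le_trans hmarkov hfinal
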